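/- For p ∈ S^d_0 and η ∈ ℝ, the support function of the set K = {(a, g) ∈ S^d × ℝ : ‖a^D‖ + g − σ_c ≤ 0, g ≤ 0}, with pairing (a,g) ⋄ (p,η) = a : p + g·η, equals σ_c‖p‖ if ‖p‖ ≤ η, and +∞ otherwise. -/

import Mathlib

open Matrix

/-- Frobenius norm of a real square matrix. -/
noncomputable def frobNorm {d : ℕ} (a : Matrix (Fin d) (Fin d) ℝ) : ℝ :=
  Real.sqrt ((aᵀ * a).trace)

/-- Deviatoric part of a square matrix. -/
noncomputable def deviator {d : ℕ} (a : Matrix (Fin d) (Fin d) ℝ) :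
    Matrix (Fin d) (Fin d) ℝ :=
  a - (a.trace / d) • (1 : Matrix (Fin d) (Fin d) ℝ)

lemma trace_tm_eq {d : ℕ} (a b : Matrix (Fin d) (Fin d) ℝ) :
    (aᵀ * b).trace = ∑ ij : Fin d × Fin d, a ij.2 ij.1 * b ij.2 ij.1 := by
  simp [Matrix.trace, Matrix.diag, Matrix.mul_apply, Fintype.sum_prod_type]

lemma frobNorm_eq {d : ℕ} (a : Matrix (Fin d) (Fin d) ℝ) :
    frobNorm a = Real.sqrt (∑ ij : Fin d × Fin d, (a ij.2 ij.1) ^ 2) := by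
  rw [frobNorm, trace_tm_eq]; simp [sq]

lemma trace_tm_self_nonneg {d : ℕ} (a : Matrix (Fin d) (Fin d) ℝ) :
    0 ≤ (aᵀ * a).trace := by
  rw [trace_tm_eq]; exact Finset.sum_nonneg fun i _ => mul_self_nonneg _

lemma cs_trace {d : ℕ} (a b : Matrix (Fin d) (Fin d) ℝ) :
    (aᵀ * b).trace ≤ frobNorm a * frobNorm b := by
  rw [trace_tm_eq, frobNorm_eq, frobNorm_eq]
  exact Real.sum_mul_le_sqrt_mul_sqrt _ _ _

lemma frobNorm_nonneg {d : ℕ} (a : Matrix (Fin d) (Fin d) ℝ) : 0 ≤ frobNorm a :=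
  Real.sqrt_nonneg _

lemma frobNorm_pos {d : ℕ} {a : Matrix (Fin d) (Fin d) ℝ} (ha : a ≠ 0) :
    0 < frobNorm a := by
  rcases (frobNorm_nonneg a).lt_or_eq with h | h
  · exact h
  · exfalso; apply ha
    have h0 : (aᵀ * a).trace = 0 := by
      have := Real.sqrt_eq_zero (trace_tm_self_nonneg a) |>.1 h.symm
      exact this
    rw [trace_tm_eq] at h0
    have := (Finset.sum_eq_zero_iff_of_nonneg
      (fun i _ => mul_self_nonneg (a i.2 i.1))).1 h0
    ext i j
    have := this (j, i) (Finset.mem_univ _)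
    simpa [mul_self_eq_zero] using this

lemma frobNorm_smul {d : ℕ} (t : ℝ) (a : Matrix (Fin d) (Fin d) ℝ) :
    frobNorm (t • a) = |t| * frobNorm a := by
  rw [frobNorm_eq, frobNorm_eq]
  simp only [Matrix.smul_apply, smul_eq_mul, mul_pow, ← Finset.mul_sum]
  rw [Real.sqrt_mul (sq_nonneg t), Real.sqrt_sq_eq_abs]

lemma sq_frobNorm {d : ℕ} (a : Matrix (Fin d) (Fin d) ℝ) :
    frobNorm a * frobNorm a = (aᵀ * a).trace := by
  rw [frobNorm]; exact Real.mul_self_sqrt (trace_tm_self_nonneg a)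

lemma deviator_of_trace_zero {d : ℕ} {a : Matrix (Fin d) (Fin d) ℝ}
    (h : a.trace = 0) : deviator a = a := by
  simp [deviator, h]

lemma trace_dev_mul {d : ℕ} (a p : Matrix (Fin d) (Fin d) ℝ) (hptr : p.trace = 0) :
    ((deviator a)ᵀ * p).trace = (aᵀ * p).trace := by
  simp [deviator, Matrix.transpose_sub, Matrix.transpose_smul, Matrix.sub_mul,
    Matrix.smul_mul, Matrix.trace_sub, Matrix.trace_smul, hptr]

/-- The support function of
`K = {(a,g) ∈ S^d × ℝ : ‖a^D‖ + g − σ_c ≤ 0, g ≤ 0}` with the pairing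
`(a,g) ⋄ (p,η) = a : p + g·η` equals `σ_c‖p‖` if `‖p‖ ≤ η` and `+∞` otherwise. -/
theorem vonMises_dissipation_isotropic {d : ℕ} (hd : 0 < d) (σc : ℝ) (hσc : 0 < σc)
    (p : Matrix (Fin d) (Fin d) ℝ) (hp : p.IsSymm) (hptr : p.trace = 0) (η : ℝ) :
    (⨆ ag ∈ {ag : Matrix (Fin d) (Fin d) ℝ × ℝ |
        ag.1.IsSymm ∧ frobNorm (deviator ag.1) + ag.2 - σc ≤ 0 ∧ ag.2 ≤ 0},
        (((ag.1ᵀ * p).trace + ag.2 * η : ℝ) : EReal))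
      = if frobNorm p ≤ η then ((σc * frobNorm p : ℝ) : EReal) else (⊤ : EReal) := by
  set N := frobNorm p with hN
  have hNnn : 0 ≤ N := frobNorm_nonneg p
  -- attainment: for every g ≤ 0 there is a feasible a with value (σc - g) * N + g * η
  have attain : ∀ g : ℝ, g ≤ 0 → ∃ a : Matrix (Fin d) (Fin d) ℝ,
      (a.IsSymm ∧ frobNorm (deviator a) + g - σc ≤ 0 ∧ g ≤ 0) ∧
      (aᵀ * p).trace + g * η = (σc - g) * N + g * η := by
    intro g hg
    by_cases hp0 : p = 0
    · refine ⟨0, ⟨?_, ?_, hg⟩, ?_⟩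
      · simp [Matrix.IsSymm]
      · have : deviator (0 : Matrix (Fin d) (Fin d) ℝ) = 0 := by simp [deviator]
        rw [this]
        have : frobNorm (0 : Matrix (Fin d) (Fin d) ℝ) = 0 := by
          simp [frobNorm]
        rw [this]; linarith
      · have : N = 0 := by
          rw [hN, hp0]; simp [frobNorm]
        rw [this, hp0]; simp
    · have hNpos : 0 < N := frobNorm_pos hp0
      set c := (σc - g) / N with hc
      have hcpos : 0 < c := div_pos (by linarith) hNpos
      refine ⟨c • p, ⟨?_, ?_, hg⟩, ?_⟩
      · rw [Matrix.IsSymm, Matrix.transpose_smul, hp]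
      · have htr : (c • p).trace = 0 := by
          rw [Matrix.trace_smul, hptr]; simp
        rw [deviator_of_trace_zero htr, frobNorm_smul, abs_of_pos hcpos, ← hN,
          hc, div_mul_cancel₀ _ (ne_of_gt hNpos)]
        linarith
      · rw [Matrix.transpose_smul, Matrix.smul_mul, Matrix.trace_smul, smul_eq_mul,
          ← sq_frobNorm p, ← hN, hc]
        field_simp
  -- upper bound: every feasible (a,g) has value ≤ σc * N + g * (η - N)
  have ub : ∀ a : Matrix (Fin d) (Fin d) ℝ, ∀ g : ℝ,
      frobNorm (deviator a) + g - σc ≤ 0 → g ≤ 0 →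
      (aᵀ * p).trace + g * η ≤ σc * N + g * (η - N) := by
    intro a g hcon hg
    have h1 : (aᵀ * p).trace = ((deviator a)ᵀ * p).trace := (trace_dev_mul a p hptr).symm
    have h2 : ((deviator a)ᵀ * p).trace ≤ frobNorm (deviator a) * N := cs_trace _ _
    have h3 : frobNorm (deviator a) * N ≤ (σc - g) * N :=
      mul_le_mul_of_nonneg_right (by linarith) hNnn
    nlinarith
  by_cases hle : N ≤ η
  · rw [if_pos hle]
    apply le_antisymm
    · refine iSup₂_le fun ag hag => ?_
      obtain ⟨_, hcon, hg⟩ := hag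
      have := ub ag.1 ag.2 hcon hg
      have hfin : ag.2 * (η - N) ≤ 0 := mul_nonpos_of_nonpos_of_nonneg hg (by linarith)
      exact_mod_cast (EReal.coe_le_coe_iff.2 (by linarith))
    · obtain ⟨a, hmem, hval⟩ := attain 0 le_rfl
      have : ((σc * N : ℝ) : EReal) = (((aᵀ * p).trace + (0:ℝ) * η : ℝ) : EReal) := by
        rw [hval]; norm_num
      rw [this]
      exact le_iSup₂_of_le (a, (0:ℝ)) hmem le_rfl
  · rw [if_neg hle]
    push_neg at hle
    rw [EReal.eq_top_iff_forall_lt]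
    intro y
    set g := min 0 ((y + 1 - σc * N) / (η - N)) with hgdef
    have hg0 : g ≤ 0 := min_le_left _ _
    have hηN : η - N < 0 := by linarith
    have hgle : g ≤ (y + 1 - σc * N) / (η - N) := min_le_right _ _
    have hkey : y + 1 ≤ (σc - g) * N + g * η := by
      have h1 : (y + 1 - σc * N) / (η - N) * (η - N) ≤ g * (η - N) :=
        mul_le_mul_of_nonpos_right hgle (le_of_lt hηN)
      rw [div_mul_cancel₀ _ (ne_of_lt hηN)] at h1
      nlinarith
    obtain ⟨a, hmem, hval⟩ := attain g hg0
    calc (y : EReal) < ((y + 1 : ℝ) : EReal) := by exact_mod_cast (by linarith : y < y + 1)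
      _ ≤ (((aᵀ * p).trace + g * η : ℝ) : EReal) := by
          rw [hval]; exact_mod_cast hkey
      _ ≤ _ := le_iSup₂_of_le (a, g) hmem le_rfl
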